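/- Let (Ω, P) be a probability space, G ≥ 1, Z : Ω → Fin G, p ≥ 1, and X, W : Ω → (Fin p → ℝ) random vectors with square-integrable coordinates such that W is independent of the pair (X, Z). Assume E[W_j] = 0 and write Σ_{jk} = Cov(W_j, W_k) for all j, k. Fix g with P(Z = g) > 0 and write Σ_{g,jk} for the covariance of X_j and X_k under the conditional measure P(· | Z = g). Let τ > 0 and define X⁽¹⁾ = X + τ·W, X⁽²⁾ = X − (1/τ)·W. Then for all coordinates j, k, the covariance of X⁽¹⁾_j and X⁽²⁾_k under P(· | Z = g) equals Σ_{g,jk} − Σ_{jk}. -/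

import Mathlib

open MeasureTheory ProbabilityTheory

/-- Covariance of two real-valued random variables: `E[UV] - E[U]E[V]`. -/
noncomputable def cov {Ω : Type*} [MeasurableSpace Ω] (P : Measure Ω) (U V : Ω → ℝ) : ℝ :=
  (∫ ω, U ω * V ω ∂P) - (∫ ω, U ω ∂P) * (∫ ω, V ω ∂P)

/-- Product of two L² functions is integrable. -/
lemma l2_mul_integrable {Ω : Type*} [MeasurableSpace Ω] {P : Measure Ω} {f g : Ω → ℝ}
    (hf : MemLp f 2 P) (hg : MemLp g 2 P) : Integrable (fun ω => f ω * g ω) P := by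
  have h : MemLp (f • g) 1 P :=
    hg.smul hf (hpqr := ⟨by simp [one_div, ENNReal.inv_two_add_inv_two]⟩)
  simpa [smul_eq_mul, Pi.mul_def] using memLp_one_iff_integrable.mp h

/-- Integral with respect to a conditional measure. -/
lemma cond_integral_eq {Ω : Type*} [MeasurableSpace Ω] (P : Measure Ω) (A : Set Ω)
    (f : Ω → ℝ) :
    ∫ ω, f ω ∂(P[|A]) = (P A).toReal⁻¹ * ∫ ω in A, f ω ∂P := by
  rw [ProbabilityTheory.cond, integral_smul_measure]
  simp [ENNReal.toReal_inv]

/-- Marginal data fission in a mixture: conditionally on the class `{Z = g}`, the two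
fissioned parts have covariance `Σ_g - Σ`, the difference between the class-specific
covariance of `X` and the (global) covariance of the noise `W`. -/
theorem marginal_fission_conditional_covariance
    {Ω : Type*} [MeasurableSpace Ω] (P : Measure Ω) [IsProbabilityMeasure P]
    (G : ℕ) (hG : 1 ≤ G) (Z : Ω → Fin G) (hZ : Measurable Z)
    (p : ℕ) (hp : 1 ≤ p) (X W : Ω → Fin p → ℝ)
    (hX : Measurable X) (hW : Measurable W)
    (hindep : IndepFun (fun ω => (X ω, Z ω)) W P)
    (hX2 : ∀ j, MemLp (fun ω => X ω j) 2 P)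
    (hW2 : ∀ j, MemLp (fun ω => W ω j) 2 P)
    (hWmean : ∀ j, (∫ ω, W ω j ∂P) = 0)
    (Sig : Fin p → Fin p → ℝ)
    (hSig : ∀ j k, Sig j k = cov P (fun ω => W ω j) (fun ω => W ω k))
    (g : Fin G) (hg : 0 < P (Z ⁻¹' {g}))
    (Sigg : Fin p → Fin p → ℝ)
    (hSigg : ∀ j k, Sigg j k
      = cov (P[|Z ⁻¹' {g}]) (fun ω => X ω j) (fun ω => X ω k))
    (τ : ℝ) (hτ : 0 < τ) :
    ∀ j k, cov (P[|Z ⁻¹' {g}])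
        (fun ω => X ω j + τ * W ω j) (fun ω => X ω k - (1 / τ) * W ω k)
      = Sigg j k - Sig j k := by
  intro j k
  set A : Set Ω := Z ⁻¹' {g} with hA_def
  have hA : MeasurableSet A := hZ (measurableSet_singleton g)
  set c : ℝ := (P A).toReal with hc_def
  have hc_pos : 0 < c := ENNReal.toReal_pos hg.ne' (measure_ne_top P A)
  have hc_ne : c ≠ 0 := hc_pos.ne'
  have hpair : Measurable (fun ω => (X ω, Z ω)) := hX.prodMk hZ
  have hSmeas : MeasurableSet {q : (Fin p → ℝ) × Fin G | q.2 = g} :=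
    measurable_snd (measurableSet_singleton g)
  -- generic independence consequence
  have key : ∀ (φ : (Fin p → ℝ) × Fin G → ℝ) (ψ : (Fin p → ℝ) → ℝ),
      Measurable φ → Measurable ψ →
      (∫ ω, φ (X ω, Z ω) * ψ (W ω) ∂P)
        = (∫ ω, φ (X ω, Z ω) ∂P) * ∫ ω, ψ (W ω) ∂P := by
    intro φ ψ hφ hψ
    have h := (hindep.comp hφ hψ).integral_fun_mul_eq_mul_integral
      ((hφ.comp hpair).aestronglyMeasurable) ((hψ.comp hW).aestronglyMeasurable)
    simpa [Function.comp] using h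
  -- measurable evaluation functions
  have hXm : ∀ l : Fin p, Measurable (fun ω => X ω l) :=
    fun l => (measurable_pi_apply l).comp hX
  have hWm : ∀ l : Fin p, Measurable (fun ω => W ω l) :=
    fun l => (measurable_pi_apply l).comp hW
  -- indicator rewriting: set integral over A as an integral of a product
  have hmemA : ∀ ω, ω ∈ A ↔ Z ω = g := by
    intro ω; simp [hA_def]
  -- φ functions
  have hφ1 : Measurable (fun q : (Fin p → ℝ) × Fin G => if q.2 = g then (1:ℝ) else 0) :=
    Measurable.ite hSmeas measurable_const measurable_const
  have hφX : ∀ l : Fin p,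
      Measurable (fun q : (Fin p → ℝ) × Fin G => if q.2 = g then q.1 l else 0) := by
    intro l
    exact Measurable.ite hSmeas ((measurable_pi_apply l).comp measurable_fst) measurable_const
  -- ∫ over A of h(W) = c * ∫ h(W), for measurable h
  have hWint : ∀ (ψ : (Fin p → ℝ) → ℝ), Measurable ψ →
      (∫ ω in A, ψ (W ω) ∂P) = c * ∫ ω, ψ (W ω) ∂P := by
    intro ψ hψ
    have h1 : (∫ ω in A, ψ (W ω) ∂P)
        = ∫ ω, (if Z ω = g then (1:ℝ) else 0) * ψ (W ω) ∂P := by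
      rw [← integral_indicator hA]
      congr 1
      funext ω
      by_cases hω : Z ω = g <;>
        simp [Set.indicator_apply, hA_def, hω]
    rw [h1, key _ _ hφ1 hψ]
    congr 1
    have : (∫ ω, (if Z ω = g then (1:ℝ) else 0) ∂P)
        = ∫ ω, A.indicator (fun _ => (1:ℝ)) ω ∂P := by
      congr 1
      funext ω
      by_cases hω : Z ω = g <;> simp [Set.indicator_apply, hA_def, hω]
    rw [this, integral_indicator hA]
    simp [hc_def, measureReal_def]
  -- ∫ over A of X_l * W_m = (∫ over A of X_l) * E[W_m] = 0
  have hXWint : ∀ (l m : Fin p), (∫ ω in A, X ω l * W ω m ∂P) = 0 := by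
    intro l m
    have h1 : (∫ ω in A, X ω l * W ω m ∂P)
        = ∫ ω, (if Z ω = g then X ω l else 0) * W ω m ∂P := by
      rw [← integral_indicator hA]
      congr 1
      funext ω
      by_cases hω : Z ω = g <;>
        simp [Set.indicator_apply, hA_def, hω]
    rw [h1]
    have h2 := key (fun q => if q.2 = g then q.1 l else 0) (fun w => w m)
      (hφX l) (measurable_pi_apply m)
    simp only at h2
    rw [h2, hWmean m, mul_zero]
  -- integrability facts
  have hXint : ∀ l : Fin p, Integrable (fun ω => X ω l) P :=
    fun l => (hX2 l).integrable one_le_two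
  have hWint' : ∀ l : Fin p, Integrable (fun ω => W ω l) P :=
    fun l => (hW2 l).integrable one_le_two
  have hXXint : ∀ l m : Fin p, Integrable (fun ω => X ω l * X ω m) P :=
    fun l m => l2_mul_integrable (hX2 l) (hX2 m)
  have hXWint' : ∀ l m : Fin p, Integrable (fun ω => X ω l * W ω m) P :=
    fun l m => l2_mul_integrable (hX2 l) (hW2 m)
  have hWWint : ∀ l m : Fin p, Integrable (fun ω => W ω l * W ω m) P :=
    fun l m => l2_mul_integrable (hW2 l) (hW2 m)
  -- abbreviations for conditional integrals
  have hcond := cond_integral_eq P A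
  -- first moments under the conditional measure
  have hEU : (∫ ω, (X ω j + τ * W ω j) ∂(P[|A]))
      = c⁻¹ * ∫ ω in A, X ω j ∂P := by
    rw [hcond]
    congr 1
    rw [integral_add ((hXint j).integrableOn) (((hWint' j).const_mul τ).integrableOn),
      integral_const_mul, hWint _ (measurable_pi_apply j), hWmean j]
    ring
  have hEV : (∫ ω, (X ω k - (1/τ) * W ω k) ∂(P[|A]))
      = c⁻¹ * ∫ ω in A, X ω k ∂P := by
    rw [hcond]
    congr 1
    rw [integral_sub ((hXint k).integrableOn) (((hWint' k).const_mul (1/τ)).integrableOn),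
      integral_const_mul, hWint _ (measurable_pi_apply k), hWmean k]
    ring
  -- second moment
  have hprodfun : ∀ ω, (X ω j + τ * W ω j) * (X ω k - (1/τ) * W ω k)
      = X ω j * X ω k + τ * (W ω j * X ω k)
        - (1/τ) * (X ω j * W ω k) - W ω j * W ω k := by
    intro ω
    field_simp
    ring
  have hWXint0 : (∫ ω in A, W ω j * X ω k ∂P) = 0 := by
    have : (∫ ω in A, W ω j * X ω k ∂P) = ∫ ω in A, X ω k * W ω j ∂P := by
      congr 1; funext ω; ring
    rw [this, hXWint k j]
  have hWWm : Measurable (fun w : Fin p → ℝ => w j * w k) :=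
    (measurable_pi_apply j).mul (measurable_pi_apply k)
  have hEUV : (∫ ω, (X ω j + τ * W ω j) * (X ω k - (1/τ) * W ω k) ∂(P[|A]))
      = c⁻¹ * (∫ ω in A, X ω j * X ω k ∂P) - ∫ ω, W ω j * W ω k ∂P := by
    rw [hcond]
    have hsplit : (∫ ω in A, (X ω j + τ * W ω j) * (X ω k - (1/τ) * W ω k) ∂P)
        = (∫ ω in A, X ω j * X ω k ∂P)
          + τ * (∫ ω in A, W ω j * X ω k ∂P)
          - (1/τ) * (∫ ω in A, X ω j * W ω k ∂P)
          - ∫ ω in A, W ω j * W ω k ∂P := by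
      have e1 : (∫ ω in A, (X ω j + τ * W ω j) * (X ω k - (1/τ) * W ω k) ∂P)
          = ∫ ω in A, (X ω j * X ω k + τ * (W ω j * X ω k)
              - (1/τ) * (X ω j * W ω k) - W ω j * W ω k) ∂P := by
        congr 1; funext ω; exact hprodfun ω
      rw [e1]
      have i1 : Integrable (fun ω => W ω j * X ω k) P := by
        have := hXWint' k j
        simpa [mul_comm] using this
      have i1' : Integrable (fun ω => τ * (W ω j * X ω k)) P := i1.const_mul τ
      have i2 : Integrable (fun ω => X ω j * X ω k + τ * (W ω j * X ω k)) P :=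
        (hXXint j k).add i1'
      have ic : Integrable (fun ω => (1/τ) * (X ω j * W ω k)) P :=
        (hXWint' j k).const_mul (1/τ)
      have i3 : Integrable
          (fun ω => X ω j * X ω k + τ * (W ω j * X ω k) - (1/τ) * (X ω j * W ω k)) P :=
        i2.sub ic
      rw [integral_sub i3.integrableOn (hWWint j k).integrableOn,
        integral_sub i2.integrableOn ic.integrableOn,
        integral_add (hXXint j k).integrableOn i1'.integrableOn,
        integral_const_mul, integral_const_mul]
    rw [hsplit, hWXint0, hXWint j k, hWint _ hWWm]
    field_simp
    rw [← hc_def, mul_div_cancel_left₀ _ hc_ne]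
    ring
  -- put everything together
  rw [hSigg j k, hSig j k]
  simp only [cov]
  rw [hEUV, hEU, hEV, hcond, hcond, hcond, hWmean j, hWmean k]
  ring
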